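/- Let α > 0 and f : [1,∞) → ℝ be non-decreasing, unbounded, continuous, with f(1) > 0, and let w(i,j) = i^{-α} f(j/i). Then there exists q > 1 minimizing g(t) = t^α f(t)/(t^α - 1) over t > 1, and for every increasing real sequence P = (1 = a_0, a_1, a_2, ...), the total weight w(P) = Σ_{k=0}^∞ a_k^{-α} f(a_{k+1}/a_k) satisfies w(P) ≥ q^α f(q)/(q^α - 1), with equality for the geometric sequence P = (1, q, q², q³, ...). -/

import Mathlib

open Real

theorem stmt_12 (α : ℝ) (hα : 0 < α) (f : ℝ → ℝ)
    (hmono : MonotoneOn f (Set.Ici 1)) (hcont : ContinuousOn f (Set.Ici 1))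
    (hunb : ∀ M : ℝ, ∃ t, 1 ≤ t ∧ M < f t) (hf1 : 0 < f 1) :
    ∃ q : ℝ, 1 < q ∧
      (∀ t : ℝ, 1 < t → q ^ α * f q / (q ^ α - 1) ≤ t ^ α * f t / (t ^ α - 1)) ∧
      (∀ a : ℕ → ℝ, a 0 = 1 → Monotone a →
        ENNReal.ofReal (q ^ α * f q / (q ^ α - 1)) ≤
          ∑' k : ℕ, ENNReal.ofReal ((a k) ^ (-α) * f (a (k+1) / a k))) ∧
      ∑' k : ℕ, ((q ^ (k : ℕ) : ℝ) ^ (-α) * f ((q ^ (k+1 : ℕ)) / (q ^ (k : ℕ))))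
        = q ^ α * f q / (q ^ α - 1) := by
  set g : ℝ → ℝ := fun t => t ^ α * f t / (t ^ α - 1) with hg
  have hfpos : ∀ t : ℝ, 1 ≤ t → 0 < f t := fun t ht =>
    lt_of_lt_of_le hf1 (hmono (by norm_num) ht ht)
  have hpow1 : ∀ t : ℝ, 1 < t → 1 < t ^ α := fun t ht =>
    (Real.one_lt_rpow_iff_of_pos (lt_trans one_pos ht)).mpr (Or.inl ⟨ht, hα⟩)
  have hgpos : ∀ t : ℝ, 1 < t → 0 < g t := by
    intro t ht
    have h1 := hpow1 t ht
    exact div_pos (mul_pos (lt_trans one_pos h1) (hfpos t ht.le)) (by linarith)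
  -- c := g 2
  set c : ℝ := g 2 with hc
  have hcpos : 0 < c := hgpos 2 one_lt_two
  -- lower bound near 1
  set δ : ℝ := min 2 ((1 + f 1 / c) ^ α⁻¹) with hδ
  have hbase : 1 < 1 + f 1 / c := by
    have := div_pos hf1 hcpos; linarith
  have hδ1 : 1 < δ := by
    refine lt_min one_lt_two ?_
    exact (Real.one_lt_rpow_iff_of_pos (by linarith)).mpr
      (Or.inl ⟨hbase, by positivity⟩)
  have hδ2 : δ ≤ 2 := min_le_left _ _
  have hsmall : ∀ t : ℝ, 1 < t → t < δ → c ≤ g t := by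
    intro t ht htδ
    have htpos : (0:ℝ) < t := lt_trans one_pos ht
    have htα : 1 < t ^ α := hpow1 t ht
    have hb : t ^ α ≤ 1 + f 1 / c := by
      have h1 : t ^ α ≤ δ ^ α :=
        Real.rpow_le_rpow htpos.le htδ.le hα.le
      have h2 : δ ^ α ≤ ((1 + f 1 / c) ^ α⁻¹) ^ α :=
        Real.rpow_le_rpow (by linarith) (min_le_right _ _) hα.le
      have h3 : ((1 + f 1 / c) ^ α⁻¹) ^ α = 1 + f 1 / c :=
        Real.rpow_inv_rpow (by linarith) hα.ne'
      linarith
    -- g t ≥ f 1 / (t^α - 1) ≥ c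
    have hnum : f 1 ≤ t ^ α * f t := by
      have := hfpos t ht.le
      have hf1t : f 1 ≤ f t := hmono (by norm_num) (le_of_lt ht) ht.le
      nlinarith
    have hd : (0:ℝ) < t ^ α - 1 := by linarith
    rw [hg, le_div_iff₀ hd]
    have : c * (t ^ α - 1) ≤ c * (f 1 / c) := by
      have : t ^ α - 1 ≤ f 1 / c := by linarith
      exact mul_le_mul_of_nonneg_left this hcpos.le
    rw [mul_div_cancel₀ _ hcpos.ne'] at this
    linarith
  -- lower bound at infinity
  obtain ⟨t0, ht0, hct0⟩ := hunb c
  set T : ℝ := max 2 t0 with hT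
  have hT2 : 2 ≤ T := le_max_left _ _
  have hbig : ∀ t : ℝ, T ≤ t → c ≤ g t := by
    intro t hTt
    have ht1 : (1:ℝ) ≤ t := le_trans (by linarith) hTt
    have hft : c ≤ f t := by
      have : f t0 ≤ f t := hmono ht0 ht1 (le_trans (le_max_right _ _) hTt)
      linarith
    have h2t : (2:ℝ) ≤ t := le_trans hT2 hTt
    have htα : 1 < t ^ α := hpow1 t (by linarith)
    have hd : (0:ℝ) < t ^ α - 1 := by linarith
    have hfpos' : 0 < f t := hfpos t ht1
    rw [hg, le_div_iff₀ hd]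
    nlinarith
  -- minimize on [δ, T]
  have hsub : Set.Icc δ T ⊆ Set.Ioi 1 := fun x hx => lt_of_lt_of_le hδ1 hx.1
  have hgcont : ContinuousOn g (Set.Icc δ T) := by
    have hrp : ContinuousOn (fun t : ℝ => t ^ α) (Set.Icc δ T) := by
      intro x hx
      exact (Real.continuousAt_rpow_const x α (Or.inl (by have := hsub hx; simp at this; positivity))).continuousWithinAt
    refine ContinuousOn.div (hrp.mul (hcont.mono ?_)) (hrp.sub continuousOn_const) ?_
    · exact fun x hx => Set.mem_Ici.mpr (le_of_lt (Set.mem_Ioi.mp (hsub hx)))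
    · intro x hx
      have : 1 < x ^ α := hpow1 x (hsub hx)
      intro h; rw [sub_eq_zero] at h; exact absurd h.symm (ne_of_lt this)
  obtain ⟨q, hqK, hqmin⟩ := (isCompact_Icc (a := δ) (b := T)).exists_isMinOn
    ⟨2, hδ2, hT2⟩ hgcont
  have hq1 : 1 < q := lt_of_lt_of_le hδ1 hqK.1
  have hmin : ∀ t : ℝ, 1 < t → g q ≤ g t := by
    intro t ht
    have hgq2 : g q ≤ c := hqmin ⟨hδ2, hT2⟩
    rcases lt_or_ge t δ with h | h
    · exact le_trans hgq2 (hsmall t ht h)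
    rcases le_or_gt t T with h' | h'
    · exact hqmin ⟨h, h'⟩
    · exact le_trans hgq2 (hbig t h'.le)
  -- basic facts about q
  have hq0 : (0:ℝ) < q := lt_trans one_pos hq1
  have hqα : 1 < q ^ α := hpow1 q hq1
  have hfq : 0 < f q := hfpos q hq1.le
  set m : ℝ := q ^ α * f q / (q ^ α - 1) with hm
  have hmpos : 0 < m := hgpos q hq1
  have hqinv : q ^ α * q ^ (-α) = 1 := by
    rw [← Real.rpow_add hq0]; simp
  -- key pointwise bound
  have hkey : ∀ t : ℝ, 1 ≤ t → m * (1 - t ^ (-α)) ≤ f t := by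
    intro t ht
    rcases eq_or_lt_of_le ht with rfl | ht'
    · rw [Real.one_rpow]; simp; exact hf1.le
    · have htα : 1 < t ^ α := hpow1 t ht'
      have htpos : (0:ℝ) < t := lt_trans one_pos ht'
      have h1 : m * (t ^ α - 1) ≤ t ^ α * f t := by
        have h0 : m ≤ t ^ α * f t / (t ^ α - 1) := hmin t ht'
        rw [le_div_iff₀ (by linarith : (0:ℝ) < t ^ α - 1)] at h0
        linarith
      have h2 : t ^ α * t ^ (-α) = 1 := by rw [← Real.rpow_add htpos]; simp
      have h3 : (0:ℝ) < t ^ α := by linarith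
      nlinarith
  refine ⟨q, hq1, hmin, ?_, ?_⟩
  · -- main inequality
    intro a ha0 hamono
    have hak : ∀ k, 1 ≤ a k := fun k => ha0 ▸ hamono (Nat.zero_le k)
    have hakpos : ∀ k, (0:ℝ) < a k := fun k => lt_of_lt_of_le one_pos (hak k)
    have hratio : ∀ k, 1 ≤ a (k+1) / a k := fun k =>
      (one_le_div (hakpos k)).mpr (hamono (Nat.le_succ k))
    by_cases hB : ∃ B : ℝ, ∀ k, a k ≤ B
    · obtain ⟨B, hBle⟩ := hB
      have hB1 : (1:ℝ) ≤ B := le_trans (hak 0) (hBle 0)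
      have hε : (0:ℝ) < B ^ (-α) * f 1 := by
        have : (0:ℝ) < B ^ (-α) := Real.rpow_pos_of_pos (by linarith) _
        positivity
      have hterm : ∀ k : ℕ, ENNReal.ofReal (B ^ (-α) * f 1)
          ≤ ENNReal.ofReal ((a k) ^ (-α) * f (a (k+1) / a k)) := by
        intro k
        apply ENNReal.ofReal_le_ofReal
        have h1 : B ^ (-α) ≤ (a k) ^ (-α) :=
          Real.rpow_le_rpow_of_nonpos (hakpos k) (hBle k) (by linarith)
        have h2 : f 1 ≤ f (a (k+1) / a k) := hmono (by norm_num) (hratio k) (hratio k)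
        have : (0:ℝ) ≤ (a k) ^ (-α) := (Real.rpow_pos_of_pos (hakpos k) _).le
        nlinarith
      have htop : (⊤ : ENNReal) ≤ ∑' k : ℕ, ENNReal.ofReal ((a k) ^ (-α) * f (a (k+1) / a k)) := by
        calc (⊤ : ENNReal) = ∑' _ : ℕ, ENNReal.ofReal (B ^ (-α) * f 1) :=
              (ENNReal.tsum_const_eq_top_of_ne_zero (by simp [ENNReal.ofReal_pos.mpr hε, (ENNReal.ofReal_pos.mpr hε).ne'])).symm
          _ ≤ _ := ENNReal.tsum_le_tsum hterm
      exact le_trans le_top htop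
    · push_neg at hB
      have hatop : Filter.Tendsto a Filter.atTop Filter.atTop :=
        Filter.tendsto_atTop_atTop_of_monotone hamono (fun B => (hB B).imp fun k h => h.le)
      have hlim0 : Filter.Tendsto (fun N => (a N) ^ (-α)) Filter.atTop (nhds 0) :=
        (tendsto_rpow_neg_atTop hα).comp hatop
      have hlim : Filter.Tendsto (fun N => ENNReal.ofReal (m * (1 - (a N) ^ (-α))))
          Filter.atTop (nhds (ENNReal.ofReal m)) := by
        have h1 : Filter.Tendsto (fun N => m * (1 - (a N) ^ (-α))) Filter.atTop (nhds (m * (1 - 0))) :=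
          Filter.Tendsto.mul tendsto_const_nhds (Filter.Tendsto.sub tendsto_const_nhds hlim0)
        have h2 := (ENNReal.continuous_ofReal.tendsto (m * (1 - 0))).comp h1
        simpa [Function.comp_def] using h2
      refine le_of_tendsto' hlim ?_
      intro N
      -- partial sum bound
      have hterm_nonneg : ∀ k : ℕ, (0:ℝ) ≤ (a k) ^ (-α) * f (a (k+1) / a k) := by
        intro k
        exact mul_nonneg (Real.rpow_pos_of_pos (hakpos k) _).le
          (hfpos _ (hratio k)).le
      have hreal : m * (1 - (a N) ^ (-α)) ≤
          ∑ k ∈ Finset.range N, (a k) ^ (-α) * f (a (k+1) / a k) := by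
        have hper : ∀ k ∈ Finset.range N,
            m * ((a k) ^ (-α) - (a (k+1)) ^ (-α)) ≤ (a k) ^ (-α) * f (a (k+1) / a k) := by
          intro k _
          have hk := hkey (a (k+1) / a k) (hratio k)
          have hdiv : (a (k+1) / a k) ^ (-α) = (a (k+1)) ^ (-α) / (a k) ^ (-α) :=
            Real.div_rpow (hakpos (k+1)).le (hakpos k).le _
          have hakα : (0:ℝ) < (a k) ^ (-α) := Real.rpow_pos_of_pos (hakpos k) _
          have h1 : (a k) ^ (-α) * (m * (1 - (a (k+1) / a k) ^ (-α)))
              ≤ (a k) ^ (-α) * f (a (k+1) / a k) :=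
            mul_le_mul_of_nonneg_left hk hakα.le
          have h2 : (a k) ^ (-α) * (a (k+1) / a k) ^ (-α) = (a (k+1)) ^ (-α) := by
            rw [hdiv]; field_simp
          nlinarith
        calc m * (1 - (a N) ^ (-α))
            = ∑ k ∈ Finset.range N, m * ((a k) ^ (-α) - (a (k+1)) ^ (-α)) := by
              rw [← Finset.mul_sum, Finset.sum_range_sub' (fun k => (a k) ^ (-α)) N,
                ha0, Real.one_rpow]
          _ ≤ _ := Finset.sum_le_sum hper
      calc ENNReal.ofReal (m * (1 - (a N) ^ (-α)))
          ≤ ENNReal.ofReal (∑ k ∈ Finset.range N, (a k) ^ (-α) * f (a (k+1) / a k)) :=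
            ENNReal.ofReal_le_ofReal hreal
        _ = ∑ k ∈ Finset.range N, ENNReal.ofReal ((a k) ^ (-α) * f (a (k+1) / a k)) :=
            ENNReal.ofReal_sum_of_nonneg (fun k _ => hterm_nonneg k)
        _ ≤ _ := ENNReal.sum_le_tsum _
  · -- geometric equality
    have hterm : ∀ k : ℕ, ((q ^ (k : ℕ) : ℝ) ^ (-α) * f ((q ^ (k+1 : ℕ)) / (q ^ (k : ℕ))))
        = (q ^ (-α)) ^ k * f q := by
      intro k
      have hqk : (0:ℝ) < q ^ k := pow_pos hq0 k
      have h1 : (q ^ (k+1) : ℝ) / q ^ k = q := by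
        rw [pow_succ]; field_simp
      have h2 : ((q ^ k : ℝ)) ^ (-α) = (q ^ (-α)) ^ k := by
        rw [← Real.rpow_natCast q k, ← Real.rpow_mul hq0.le, mul_comm,
          Real.rpow_mul hq0.le, Real.rpow_natCast]
      rw [h1, h2]
    rw [tsum_congr hterm]
    have hr0 : (0:ℝ) ≤ q ^ (-α) := (Real.rpow_pos_of_pos hq0 _).le
    have hr1 : q ^ (-α) < 1 := Real.rpow_lt_one_of_one_lt_of_neg hq1 (by linarith)
    rw [tsum_mul_right, tsum_geometric_of_lt_one hr0 hr1]
    have hd : (0:ℝ) < 1 - q ^ (-α) := by linarith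
    have h5 : q ^ α - 1 = q ^ α * (1 - q ^ (-α)) := by rw [mul_sub, mul_one, hqinv]
    rw [h5, mul_div_mul_left _ _ (by positivity : q ^ α ≠ 0), inv_mul_eq_div]
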